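/- In the square grid with a periodic configuration c (periodic of period n in both coordinate directions): let u be a cell whose four neighbors are all inactive in c, suppose u is not stable for c under rule 34, and suppose the connected component G[0,u] of inactive cells containing u is a finite tree. Rooting this tree at u, let d1 ≥ d2 ≥ d3 ≥ d4 be the depths of the four subtrees consisting of the descendants of the four neighbors of u. Then u is stable for c under rule 3 if and only if d1 = d2. -/

import Mathlib

/-- The von Neumann neighborhood of a cell of the square grid. -/
def sqNbrs (p : ℤ × ℤ) : Finset (ℤ × ℤ) :=
  {(p.1 + 1, p.2), (p.1 - 1, p.2), (p.1, p.2 + 1), (p.1, p.2 - 1)}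

/-- Number of active neighbors of `p` in configuration `c`. -/
def sqActCount (c : ℤ × ℤ → Bool) (p : ℤ × ℤ) : ℕ :=
  ((sqNbrs p).filter (fun q => c q = true)).card

/-- The freezing totalistic rule on the square grid with activating set `I`:
active cells stay active, an inactive cell becomes active iff its number of
active neighbors lies in `I`. -/
def ruleS (I : Finset ℕ) (c : ℤ × ℤ → Bool) : ℤ × ℤ → Bool :=
  fun p => c p || decide (sqActCount c p ∈ I)

/-- A cell `u` is stable for `c` under `F` if it is inactive and remains
inactive at all times. -/
def isStable (F : (ℤ × ℤ → Bool) → (ℤ × ℤ → Bool)) (c : ℤ × ℤ → Bool)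
    (u : ℤ × ℤ) : Prop :=
  c u = false ∧ ∀ t : ℕ, F^[t] c u = false

/-- A configuration is periodic of period `n` in both coordinate directions. -/
def Periodic (n : ℕ) (c : ℤ × ℤ → Bool) : Prop :=
  ∀ p : ℤ × ℤ, c (p.1 + n, p.2) = c p ∧ c (p.1, p.2 + n) = c p

/-- The graph `G[0]` on the inactive cells of `c`, with von Neumann adjacency. -/
def sqG0 (c : ℤ × ℤ → Bool) : SimpleGraph (ℤ × ℤ) where
  Adj p q := p ≠ q ∧ c p = false ∧ c q = false ∧ (q ∈ sqNbrs p ∨ p ∈ sqNbrs q)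
  symm := ⟨fun p q h => ⟨h.1.symm, h.2.2.1, h.2.1, h.2.2.2.symm⟩⟩
  loopless := ⟨fun p h => h.1 rfl⟩

/-- In the tree `G[0,u]` rooted at `u`, the depth of the subtree of
descendants of the neighbor `v` of `u`. -/
def subtreeDepth (c : ℤ × ℤ → Bool) (u v : ℤ × ℤ) (d : ℕ) : Prop :=
  (∀ w, (sqG0 c).Reachable u w →
      (sqG0 c).dist u w = (sqG0 c).dist v w + 1 → (sqG0 c).dist v w ≤ d) ∧
  (∃ w, (sqG0 c).Reachable u w ∧
      (sqG0 c).dist u w = (sqG0 c).dist v w + 1 ∧ (sqG0 c).dist v w = d)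

namespace Stmt9

lemma mem_sqNbrs {p q : ℤ × ℤ} :
    q ∈ sqNbrs p ↔ q = (p.1+1, p.2) ∨ q = (p.1-1, p.2) ∨ q = (p.1, p.2+1) ∨ q = (p.1, p.2-1) := by
  simp [sqNbrs]

lemma ne_of_mem_sqNbrs {p q : ℤ × ℤ} (h : q ∈ sqNbrs p) : q ≠ p := by
  rcases mem_sqNbrs.1 h with h | h | h | h <;> subst h <;>
    simp [Prod.ext_iff] <;> omega

lemma card_sqNbrs (p : ℤ × ℤ) : (sqNbrs p).card = 4 := by
  simp only [sqNbrs]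
  rw [Finset.card_insert_of_notMem, Finset.card_insert_of_notMem,
    Finset.card_insert_of_notMem, Finset.card_singleton] <;>
    simp [Prod.ext_iff] <;> omega

lemma chi_adj {c : ℤ × ℤ → Bool} {p q : ℤ × ℤ} (h : (sqG0 c).Adj p q) :
    q.1 + q.2 = p.1 + p.2 + 1 ∨ q.1 + q.2 = p.1 + p.2 - 1 := by
  rcases h.2.2.2 with h' | h' <;> rcases mem_sqNbrs.1 h' with h | h | h | h <;>
    rw [Prod.ext_iff] at h <;> omega

lemma walk_parity {c : ℤ × ℤ → Bool} {a b : ℤ × ℤ} (p : (sqG0 c).Walk a b) :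
    (p.length : ℤ) % 2 = (a.1 + a.2 - (b.1 + b.2)) % 2 := by
  induction p with
  | nil => simp
  | cons h q ih =>
    have h2 := chi_adj h
    simp only [SimpleGraph.Walk.length_cons]
    push_cast
    omega

end Stmt9

namespace Stmt9

open SimpleGraph Walk

lemma mem_sqNbrs_symm {p q : ℤ × ℤ} (h : q ∈ sqNbrs p) : p ∈ sqNbrs q := by
  rcases mem_sqNbrs.1 h with h | h | h | h <;> subst h <;>
    simp [mem_sqNbrs, Prod.ext_iff] <;> omega

lemma adj_mem_sqNbrs {c : ℤ × ℤ → Bool} {p q : ℤ × ℤ} (h : (sqG0 c).Adj p q) :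
    q ∈ sqNbrs p := by
  rcases h.2.2.2 with h' | h'
  · exact h'
  · exact mem_sqNbrs_symm h'

lemma inactive_of_walk {c : ℤ × ℤ → Bool} :
    ∀ {a b : ℤ × ℤ}, (sqG0 c).Walk a b → c a = false → c b = false
  | _, _, .nil, h => h
  | _, _, .cons hadj q, _ => inactive_of_walk q hadj.2.2.1

variable {c : ℤ × ℤ → Bool} {u : ℤ × ℤ}

/-- The component graph: `sqG0 c` restricted to the component of `u`. -/
def Gc (c : ℤ × ℤ → Bool) (u : ℤ × ℤ) : SimpleGraph (ℤ × ℤ) where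
  Adj p q := (sqG0 c).Adj p q ∧ (sqG0 c).Reachable u p ∧ (sqG0 c).Reachable u q
  symm := ⟨fun p q h => ⟨h.1.symm, h.2.2, h.2.1⟩⟩
  loopless := ⟨fun p h => h.1.ne rfl⟩

lemma Gc_le : Gc c u ≤ sqG0 c := fun _ _ h => h.1

lemma Gc_acyclic
    (hacyc : ∀ w, (sqG0 c).Reachable u w → ∀ p : (sqG0 c).Walk w w, ¬ p.IsCycle) :
    (Gc c u).IsAcyclic := by
  intro v p hp
  have hv : (sqG0 c).Reachable u v := by
    cases p with
    | nil => exact absurd rfl hp.ne_nil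
    | cons h q => exact h.2.1
  exact hacyc v hv (p.mapLe Gc_le) (hp.mapLe Gc_le)

lemma lift_walk :
    ∀ {a b : ℤ × ℤ} (p : (sqG0 c).Walk a b), (sqG0 c).Reachable u a →
      ∃ q : (Gc c u).Walk a b, q.length = p.length
  | _, _, .nil, _ => ⟨.nil, rfl⟩
  | _, _, .cons h p, ha => by
    have hb := ha.trans h.reachable
    obtain ⟨q, hq⟩ := lift_walk p hb
    exact ⟨.cons (show (Gc c u).Adj _ _ from ⟨h, ha, hb⟩) q, by simp [hq]⟩

lemma adj_dist_or {w q : ℤ × ℤ} (hw : (sqG0 c).Reachable u w) (h : (sqG0 c).Adj w q) :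
    (sqG0 c).dist u q = (sqG0 c).dist u w + 1 ∨
      (sqG0 c).dist u w = (sqG0 c).dist u q + 1 := by
  have hq : (sqG0 c).Reachable u q := hw.trans h.reachable
  obtain ⟨pw, hpw⟩ := hw.exists_walk_length_eq_dist
  obtain ⟨pq, hpq⟩ := hq.exists_walk_length_eq_dist
  have t1 : (sqG0 c).dist u q ≤ (sqG0 c).dist u w + 1 := by
    have := (sqG0 c).dist_le (pw.concat h)
    simpa [Walk.length_concat, hpw] using this
  have t2 : (sqG0 c).dist u w ≤ (sqG0 c).dist u q + 1 := by
    have := (sqG0 c).dist_le (pq.concat h.symm)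
    simpa [Walk.length_concat, hpq] using this
  have pw' := walk_parity pw; rw [hpw] at pw'
  have pq' := walk_parity pq; rw [hpq] at pq'
  have := chi_adj h
  omega

end Stmt9

namespace Stmt9

open SimpleGraph Walk

variable {c : ℤ × ℤ → Bool} {u : ℤ × ℤ}

lemma parent_exists {w : ℤ × ℤ} (hw : (sqG0 c).Reachable u w) (hne : u ≠ w) :
    ∃ p, (sqG0 c).Adj w p ∧ (sqG0 c).dist u p + 1 = (sqG0 c).dist u w := by
  have hd0 : (sqG0 c).dist u w ≠ 0 :=
    SimpleGraph.dist_ne_zero_iff_ne_and_reachable.2 ⟨hne, hw⟩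
  obtain ⟨q, hq⟩ := hw.exists_walk_length_eq_dist
  have hqr : q.reverse.length = (sqG0 c).dist u w := by simp [hq]
  cases hq' : q.reverse with
  | nil => exact absurd SimpleGraph.dist_self hd0
  | cons h r =>
    rename_i v
    rw [hq'] at hqr
    simp only [Walk.length_cons] at hqr
    refine ⟨v, h, ?_⟩
    have t1 : (sqG0 c).dist u v ≤ r.reverse.length := (sqG0 c).dist_le r.reverse
    rw [Walk.length_reverse] at t1
    have t2 : (sqG0 c).dist u w ≤ (sqG0 c).dist u v + 1 := by
      have hv : (sqG0 c).Reachable u v := ⟨r.reverse⟩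
      obtain ⟨pv, hpv⟩ := hv.exists_walk_length_eq_dist
      have := (sqG0 c).dist_le (pv.concat h.symm)
      simpa [Walk.length_concat, hpv] using this
    omega

lemma parent_unique
    (hacyc : ∀ w, (sqG0 c).Reachable u w → ∀ p : (sqG0 c).Walk w w, ¬ p.IsCycle)
    {w p1 p2 : ℤ × ℤ} (hw : (sqG0 c).Reachable u w)
    (h1 : (sqG0 c).Adj w p1) (h2 : (sqG0 c).Adj w p2)
    (hdp1 : (sqG0 c).dist u p1 + 1 = (sqG0 c).dist u w)
    (hdp2 : (sqG0 c).dist u p2 + 1 = (sqG0 c).dist u w) : p1 = p2 := by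
  have key : ∀ {p : ℤ × ℤ}, (sqG0 c).Adj w p →
      (sqG0 c).dist u p + 1 = (sqG0 c).dist u w →
      ∃ P : (Gc c u).Walk w u, P.IsPath ∧ P.getVert 1 = p := by
    intro p hadj hdp
    have hRp : (sqG0 c).Reachable u p := hw.trans hadj.reachable
    obtain ⟨q0, hq0⟩ := hRp.exists_walk_length_eq_dist
    obtain ⟨q1, hq1⟩ := lift_walk q0 (SimpleGraph.Reachable.refl u)
    have hr1path : q1.bypass.IsPath := Walk.bypass_isPath q1
    have hr1len : q1.bypass.length ≤ (sqG0 c).dist u p := by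
      have := Walk.length_bypass_le q1
      omega
    have hwnot : w ∉ q1.bypass.support := by
      intro hmem
      have hlen := Walk.length_takeUntil_le q1.bypass hmem
      have := (sqG0 c).dist_le ((q1.bypass.takeUntil w hmem).mapLe Gc_le)
      rw [Walk.length_map] at this
      omega
    refine ⟨Walk.cons (show (Gc c u).Adj w p from ⟨hadj, hw, hRp⟩) q1.bypass.reverse, ?_, ?_⟩
    · rw [Walk.cons_isPath_iff]
      refine ⟨hr1path.reverse, ?_⟩
      rw [Walk.support_reverse, List.mem_reverse]
      exact hwnot
    · rw [Walk.getVert_cons_succ, Walk.getVert_zero]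
  obtain ⟨P1, hP1, hg1⟩ := key h1 hdp1
  obtain ⟨P2, hP2, hg2⟩ := key h2 hdp2
  have := (Gc_acyclic hacyc).path_unique ⟨P1, hP1⟩ ⟨P2, hP2⟩
  have hPP : P1 = P2 := congrArg Subtype.val this
  rw [← hg1, ← hg2, hPP]

end Stmt9

namespace Stmt9

open SimpleGraph Walk

variable {c : ℤ × ℤ → Bool} {u : ℤ × ℤ}

lemma child_desc {w q x : ℤ × ℤ} (hw : (sqG0 c).Reachable u w)
    (hq : (sqG0 c).Adj w q) (hdq : (sqG0 c).dist u q = (sqG0 c).dist u w + 1)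
    (hx : (sqG0 c).Reachable u x)
    (hxq : (sqG0 c).dist u x = (sqG0 c).dist u q + (sqG0 c).dist q x) :
    (sqG0 c).dist u x = (sqG0 c).dist u w + (sqG0 c).dist w x ∧
      (sqG0 c).dist w x = (sqG0 c).dist q x + 1 := by
  have hRq : (sqG0 c).Reachable u q := hw.trans hq.reachable
  have hqx : (sqG0 c).Reachable q x := hRq.symm.trans hx
  obtain ⟨pqx, h1⟩ := hqx.exists_walk_length_eq_dist
  have t1 : (sqG0 c).dist w x ≤ (sqG0 c).dist q x + 1 := by
    have := (sqG0 c).dist_le (Walk.cons hq pqx)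
    simpa [h1, Nat.add_comm] using this
  have hwx : (sqG0 c).Reachable w x := hw.symm.trans hx
  obtain ⟨pw, h2⟩ := hw.exists_walk_length_eq_dist
  obtain ⟨pwx, h3⟩ := hwx.exists_walk_length_eq_dist
  have t2 : (sqG0 c).dist u x ≤ (sqG0 c).dist u w + (sqG0 c).dist w x := by
    have := (sqG0 c).dist_le (pw.append pwx)
    simpa [Walk.length_append, h2, h3] using this
  omega

lemma desc_unfold {w x : ℤ × ℤ} (hw : (sqG0 c).Reachable u w)
    (hx : (sqG0 c).Reachable u x)
    (hdx : (sqG0 c).dist u x = (sqG0 c).dist u w + (sqG0 c).dist w x)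
    (hne : w ≠ x) :
    ∃ q, (sqG0 c).Adj w q ∧ (sqG0 c).dist u q = (sqG0 c).dist u w + 1 ∧
      (sqG0 c).dist u x = (sqG0 c).dist u q + (sqG0 c).dist q x ∧
      (sqG0 c).dist q x + 1 = (sqG0 c).dist w x := by
  have hwx : (sqG0 c).Reachable w x := hw.symm.trans hx
  have hd0 : (sqG0 c).dist w x ≠ 0 :=
    SimpleGraph.dist_ne_zero_iff_ne_and_reachable.2 ⟨hne, hwx⟩
  obtain ⟨pwx, hp⟩ := hwx.exists_walk_length_eq_dist
  cases pwx with
  | nil => simp at hp; omega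
  | cons h r =>
    rename_i v
    simp only [Walk.length_cons] at hp
    have hqx : (sqG0 c).Reachable v x := ⟨r⟩
    have t1 : (sqG0 c).dist v x ≤ r.length := (sqG0 c).dist_le r
    obtain ⟨rq, hrq⟩ := hqx.exists_walk_length_eq_dist
    have t2 : (sqG0 c).dist w x ≤ (sqG0 c).dist v x + 1 := by
      have := (sqG0 c).dist_le (Walk.cons h rq)
      simpa [hrq, Nat.add_comm] using this
    have hdvx : (sqG0 c).dist v x + 1 = (sqG0 c).dist w x := by omega
    rcases adj_dist_or hw h with hd | hd
    · exact ⟨v, h, hd, by omega, hdvx⟩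
    · exfalso
      have hRv : (sqG0 c).Reachable u v := hw.trans h.reachable
      obtain ⟨pv, hpv⟩ := hRv.exists_walk_length_eq_dist
      have t3 : (sqG0 c).dist u x ≤ (sqG0 c).dist u v + (sqG0 c).dist v x := by
        have := (sqG0 c).dist_le (pv.append rq)
        simpa [Walk.length_append, hpv, hrq] using this
      omega

end Stmt9

namespace Stmt9

lemma active_persists (I : Finset ℕ) {c : ℤ × ℤ → Bool} {p : ℤ × ℤ}
    (h : c p = true) (t : ℕ) : (ruleS I)^[t] c p = true := by
  induction t with
  | zero => exact h
  | succ t ih => rw [Function.iterate_succ_apply']; simp [ruleS, ih]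

end Stmt9

/-- square grid, `c` periodic of period `n`. Let `u` be an
inactive cell whose four neighbors `u1, u2, u3, u4` are all inactive, suppose
`u` is not stable under rule 34, and suppose the component `G[0,u]` of
inactive cells containing `u` is a finite tree. Rooting the tree at `u`, let
`d1 ≥ d2 ≥ d3 ≥ d4` be the depths of the subtrees of descendants of the four
neighbors. Then `u` is stable under rule 3 iff `d1 = d2`. -/
theorem stmt9 (n : ℕ) (hn : 0 < n) (c : ℤ × ℤ → Bool)
    (hper : Periodic n c) (u u1 u2 u3 u4 : ℤ × ℤ)
    (hnbrs : sqNbrs u = {u1, u2, u3, u4})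
    (h12 : u1 ≠ u2) (h13 : u1 ≠ u3) (h14 : u1 ≠ u4)
    (h23 : u2 ≠ u3) (h24 : u2 ≠ u4) (h34 : u3 ≠ u4)
    (hu : c u = false)
    (hc1 : c u1 = false) (hc2 : c u2 = false) (hc3 : c u3 = false)
    (hc4 : c u4 = false)
    (hnstab34 : ¬ isStable (ruleS {3, 4}) c u)
    -- the component is finite
    (s : Finset (ℤ × ℤ)) (hs : ∀ w, (sqG0 c).Reachable u w ↔ w ∈ s)
    -- the component is acyclic (hence a tree, being connected by definition)
    (hacyc : ∀ w, (sqG0 c).Reachable u w → ∀ p : (sqG0 c).Walk w w, ¬ p.IsCycle)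
    (d1 d2 d3 d4 : ℕ)
    (hd1 : subtreeDepth c u u1 d1) (hd2 : subtreeDepth c u u2 d2)
    (hd3 : subtreeDepth c u u3 d3) (hd4 : subtreeDepth c u u4 d4)
    (hord21 : d2 ≤ d1) (hord32 : d3 ≤ d2) (hord43 : d4 ≤ d3) :
    isStable (ruleS {3}) c u ↔ d1 = d2 := by
  classical
  clear hnstab34 hper hn
  open Stmt9 in
  -- component cells are inactive
  have hcomp : ∀ {w}, (sqG0 c).Reachable u w → c w = false := by
    intro w hw; obtain ⟨p⟩ := hw; exact Stmt9.inactive_of_walk p hu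
  -- depth function
  set e : ℤ × ℤ → ℕ := fun w =>
    (s.filter (fun x => (sqG0 c).dist u x = (sqG0 c).dist u w + (sqG0 c).dist w x)).sup
      (fun x => (sqG0 c).dist w x) with he_def
  have e_le : ∀ {w x : ℤ × ℤ}, (sqG0 c).Reachable u x →
      (sqG0 c).dist u x = (sqG0 c).dist u w + (sqG0 c).dist w x →
      (sqG0 c).dist w x ≤ e w := by
    intro w x hx hdx
    exact Finset.le_sup (Finset.mem_filter.2 ⟨(hs _).1 hx, hdx⟩)
  have e_wit : ∀ {w : ℤ × ℤ}, (sqG0 c).Reachable u w → ∃ x, (sqG0 c).Reachable u x ∧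
      (sqG0 c).dist u x = (sqG0 c).dist u w + (sqG0 c).dist w x ∧
      (sqG0 c).dist w x = e w := by
    intro w hw
    have hne : (s.filter (fun x => (sqG0 c).dist u x =
        (sqG0 c).dist u w + (sqG0 c).dist w x)).Nonempty :=
      ⟨w, Finset.mem_filter.2 ⟨(hs _).1 hw, by simp [SimpleGraph.dist_self]⟩⟩
    obtain ⟨x, hxmem, hxe⟩ := Finset.exists_mem_eq_sup _ hne
      (fun x => (sqG0 c).dist w x)
    rcases Finset.mem_filter.1 hxmem with ⟨hxs, hxd⟩
    exact ⟨x, (hs x).2 hxs, hxd, hxe.symm⟩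
  have e_child : ∀ {w q : ℤ × ℤ}, (sqG0 c).Reachable u w → (sqG0 c).Adj w q →
      (sqG0 c).dist u q = (sqG0 c).dist u w + 1 → e q + 1 ≤ e w := by
    intro w q hw hq hdq
    have hRq : (sqG0 c).Reachable u q := hw.trans hq.reachable
    obtain ⟨x, hx, hdx, hex⟩ := e_wit hRq
    obtain ⟨h1, h2⟩ := Stmt9.child_desc hw hq hdq hx hdx
    have := e_le hx h1
    omega
  
  -- generic helpers
  have hfalse : ∀ (b : Bool) (P : Prop), (b = true ↔ P) → ¬ P → b = false := by
    intro b P h hP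
    cases b with
    | false => rfl
    | true => exact absurd (h.1 rfl) hP
  -- the four neighbours
  have hm1 : u1 ∈ sqNbrs u := by rw [hnbrs]; simp
  have hm2 : u2 ∈ sqNbrs u := by rw [hnbrs]; simp
  have hm3 : u3 ∈ sqNbrs u := by rw [hnbrs]; simp
  have hm4 : u4 ∈ sqNbrs u := by rw [hnbrs]; simp
  have hA1 : (sqG0 c).Adj u u1 := ⟨(Stmt9.ne_of_mem_sqNbrs hm1).symm, hu, hc1, Or.inl hm1⟩
  have hA2 : (sqG0 c).Adj u u2 := ⟨(Stmt9.ne_of_mem_sqNbrs hm2).symm, hu, hc2, Or.inl hm2⟩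
  have hA3 : (sqG0 c).Adj u u3 := ⟨(Stmt9.ne_of_mem_sqNbrs hm3).symm, hu, hc3, Or.inl hm3⟩
  have hA4 : (sqG0 c).Adj u u4 := ⟨(Stmt9.ne_of_mem_sqNbrs hm4).symm, hu, hc4, Or.inl hm4⟩
  have heGen : ∀ (v : ℤ × ℤ) (d : ℕ), (sqG0 c).Adj u v → subtreeDepth c u v d →
      e v = d := by
    intro v d hadj hsd
    have hDv : (sqG0 c).dist u v = 1 := SimpleGraph.dist_eq_one_iff_adj.2 hadj
    apply le_antisymm
    · refine Finset.sup_le ?_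
      intro x hx
      rcases Finset.mem_filter.1 hx with ⟨hxs, hxd⟩
      exact hsd.1 x ((hs x).2 hxs) (by omega)
    · obtain ⟨w, hwR, hweq, hwd⟩ := hsd.2
      have hmem : w ∈ s.filter (fun x => (sqG0 c).dist u x =
          (sqG0 c).dist u v + (sqG0 c).dist v x) :=
        Finset.mem_filter.2 ⟨(hs w).1 hwR, by omega⟩
      have h2 : (sqG0 c).dist v w ≤ e v := Finset.le_sup hmem
      omega
  have he1 : e u1 = d1 := heGen u1 d1 hA1 hd1
  have he2 : e u2 = d2 := heGen u2 d2 hA2 hd2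
  have he3 : e u3 = d3 := heGen u3 d3 hA3 hd3
  have he4 : e u4 = d4 := heGen u4 d4 hA4 hd4
  -- activity of a neighbour of u, given the invariant at time t
  have hact : ∀ t : ℕ,
      (∀ w, (sqG0 c).Reachable u w → w ≠ u →
        (((ruleS {3})^[t] c w = true) ↔ e w + 1 ≤ t)) →
      ∀ (v : ℤ × ℤ) (d : ℕ), (sqG0 c).Adj u v → e v = d →
        (((ruleS {3})^[t] c v = true) ↔ d + 1 ≤ t) := by
    intro t h v d hadj hed
    rw [← hed]
    exact h v hadj.reachable hadj.ne'
  -- a bound on the activity count at u when u1 and u2 are inactive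
  have hcard2 : ∀ (X : ℤ × ℤ → Bool), X u1 = false → X u2 = false →
      sqActCount X u ≤ 2 := by
    intro X hX1 hX2
    have hsub : (sqNbrs u).filter (fun q => X q = true) ⊆
        ((sqNbrs u).erase u1).erase u2 := by
      intro q hq
      rcases Finset.mem_filter.1 hq with ⟨hqn, hqX⟩
      refine Finset.mem_erase.2 ⟨?_, Finset.mem_erase.2 ⟨?_, hqn⟩⟩ <;> rintro rfl
      · rw [hX2] at hqX; exact Bool.false_ne_true hqX
      · rw [hX1] at hqX; exact Bool.false_ne_true hqX
    have h4 := Finset.card_le_card hsub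
    rw [Finset.card_erase_of_mem (Finset.mem_erase.2 ⟨h12.symm, hm2⟩),
      Finset.card_erase_of_mem hm1, Stmt9.card_sqNbrs] at h4
    unfold sqActCount
    omega
  -- THE KEY STEP LEMMA
  have hstep : ∀ t : ℕ,
      ((ruleS {3})^[t] c u = false ∧ ∀ w, (sqG0 c).Reachable u w → w ≠ u →
        (((ruleS {3})^[t] c w = true) ↔ e w + 1 ≤ t)) →
      sqActCount ((ruleS {3})^[t] c) u ≠ 3 →
      ((ruleS {3})^[t+1] c u = false ∧ ∀ w, (sqG0 c).Reachable u w → w ≠ u →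
        (((ruleS {3})^[t+1] c w = true) ↔ e w + 1 ≤ t + 1)) := by
    rintro t ⟨hQu, hQw⟩ hcount
    constructor
    · rw [Function.iterate_succ_apply']
      simp only [ruleS, hQu, Bool.false_or, decide_eq_false_iff_not,
        Finset.mem_singleton]
      exact hcount
    · intro w hw hwne
      rw [Function.iterate_succ_apply']
      simp only [ruleS, Bool.or_eq_true, decide_eq_true_eq, Finset.mem_singleton]
      have hXw := hQw w hw hwne
      obtain ⟨p, hpadj, hpd⟩ := Stmt9.parent_exists hw (Ne.symm hwne)
      have hRp : (sqG0 c).Reachable u p := hw.trans hpadj.reachable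
      have hXp : t ≤ e w → (ruleS {3})^[t] c p = false := by
        intro ht
        cases hv : (ruleS {3})^[t] c p with
        | false => rfl
        | true =>
          exfalso
          by_cases hpu : p = u
          · rw [hpu, hQu] at hv; exact Bool.false_ne_true hv
          · have h1 : e w + 1 ≤ e p := e_child hRp hpadj.symm (by omega)
            have := (hQw p hRp hpu).1 hv
            omega
      by_cases h1 : e w + 1 ≤ t
      · exact iff_of_true (Or.inl (hXw.2 h1)) (by omega)
      by_cases h2 : e w = t
      · have hfilter : (sqNbrs w).filter (fun q => (ruleS {3})^[t] c q = true)
            = (sqNbrs w).erase p := by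
          ext q
          simp only [Finset.mem_filter, Finset.mem_erase]
          constructor
          · rintro ⟨hqn, hqX⟩
            refine ⟨?_, hqn⟩
            rintro rfl
            rw [hXp (by omega)] at hqX
            exact Bool.false_ne_true hqX
          · rintro ⟨hqp, hqn⟩
            refine ⟨hqn, ?_⟩
            cases hcq : c q with
            | true => exact Stmt9.active_persists _ hcq t
            | false =>
              have hadj : (sqG0 c).Adj w q :=
                ⟨(Stmt9.ne_of_mem_sqNbrs hqn).symm, hcomp hw, hcq, Or.inl hqn⟩
              rcases Stmt9.adj_dist_or hw hadj with hd | hd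
              · have hRq : (sqG0 c).Reachable u q := hw.trans hadj.reachable
                have hqu : q ≠ u := by
                  rintro rfl
                  rw [SimpleGraph.dist_self] at hd
                  omega
                have := e_child hw hadj hd
                exact (hQw q hRq hqu).2 (by omega)
              · exact absurd (Stmt9.parent_unique hacyc hw hadj hpadj (by omega) hpd) hqp
        have hcnt : sqActCount ((ruleS {3})^[t] c) w = 3 := by
          unfold sqActCount
          rw [hfilter, Finset.card_erase_of_mem (Stmt9.adj_mem_sqNbrs hpadj),
            Stmt9.card_sqNbrs]
        exact iff_of_true (Or.inr hcnt) (by omega)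
      · have h3 : t < e w := by omega
        have hXwf : (ruleS {3})^[t] c w = false := hfalse _ _ hXw (by omega)
        obtain ⟨x, hxR, hxD, hxd⟩ := e_wit hw
        have hxw : w ≠ x := by
          rintro rfl
          rw [SimpleGraph.dist_self] at hxd
          omega
        obtain ⟨q0, hq0adj, hq0D, hq0desc, hq0d⟩ := Stmt9.desc_unfold hw hxR hxD hxw
        have hRq0 : (sqG0 c).Reachable u q0 := hw.trans hq0adj.reachable
        have hq0u : q0 ≠ u := by
          rintro rfl
          rw [SimpleGraph.dist_self] at hq0D
          omega
        have heq0 : e w ≤ e q0 + 1 := by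
          have := e_le hxR hq0desc
          omega
        have hXq0 : (ruleS {3})^[t] c q0 = false :=
          hfalse _ _ (hQw q0 hRq0 hq0u) (by omega)
        have hpq0 : p ≠ q0 := by
          rintro rfl
          omega
        have hsub : (sqNbrs w).filter (fun q => (ruleS {3})^[t] c q = true)
            ⊆ ((sqNbrs w).erase p).erase q0 := by
          intro q hq
          rcases Finset.mem_filter.1 hq with ⟨hqn, hqX⟩
          refine Finset.mem_erase.2 ⟨?_, Finset.mem_erase.2 ⟨?_, hqn⟩⟩ <;> rintro rfl
          · rw [hXq0] at hqX; exact Bool.false_ne_true hqX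
          · rw [hXp (by omega)] at hqX; exact Bool.false_ne_true hqX
        have hcard : sqActCount ((ruleS {3})^[t] c) w ≤ 2 := by
          have h4 := Finset.card_le_card hsub
          rw [Finset.card_erase_of_mem (Finset.mem_erase.2
              ⟨Ne.symm hpq0, Stmt9.adj_mem_sqNbrs hq0adj⟩),
            Finset.card_erase_of_mem (Stmt9.adj_mem_sqNbrs hpadj),
            Stmt9.card_sqNbrs] at h4
          unfold sqActCount
          omega
        refine iff_of_false ?_ (by omega)
        rintro (hv | hv)
        · rw [hXwf] at hv; exact Bool.false_ne_true hv
        · omega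
  -- base case
  have hQ0 : (ruleS {3})^[0] c u = false ∧ ∀ w, (sqG0 c).Reachable u w → w ≠ u →
      (((ruleS {3})^[0] c w = true) ↔ e w + 1 ≤ 0) := by
    refine ⟨hu, ?_⟩
    intro w hw _
    exact iff_of_false (by simp [hcomp hw]) (by omega)
  constructor
  · -- stable under rule 3 → d1 = d2
    intro hstab
    by_contra hne12
    have hgt : d2 < d1 := lt_of_le_of_ne hord21 (Ne.symm hne12)
    have hQle : ∀ t, t ≤ d2 + 1 →
        ((ruleS {3})^[t] c u = false ∧ ∀ w, (sqG0 c).Reachable u w → w ≠ u →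
          (((ruleS {3})^[t] c w = true) ↔ e w + 1 ≤ t)) := by
      intro t
      induction t with
      | zero => intro _; exact hQ0
      | succ t ih =>
        intro ht
        have hQt := ih (by omega)
        refine hstep t hQt ?_
        intro hcnt
        have hX1 : (ruleS {3})^[t] c u1 = false :=
          hfalse _ _ (hact t hQt.2 u1 d1 hA1 he1) (by omega)
        have hX2 : (ruleS {3})^[t] c u2 = false :=
          hfalse _ _ (hact t hQt.2 u2 d2 hA2 he2) (by omega)
        have := hcard2 _ hX1 hX2
        omega
    have hQT := hQle (d2+1) le_rfl
    have hfil : (sqNbrs u).filter (fun q => (ruleS {3})^[d2+1] c q = true)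
        = (sqNbrs u).erase u1 := by
      ext q
      simp only [Finset.mem_filter, Finset.mem_erase]
      constructor
      · rintro ⟨hqn, hqX⟩
        refine ⟨?_, hqn⟩
        intro hq1
        rw [hq1] at hqX
        have := (hact (d2+1) hQT.2 u1 d1 hA1 he1).1 hqX
        omega
      · rintro ⟨hqu1, hqn⟩
        refine ⟨hqn, ?_⟩
        have hq4 : q = u1 ∨ q = u2 ∨ q = u3 ∨ q = u4 := by
          rw [hnbrs] at hqn
          simpa using hqn
        rcases hq4 with hq | hq | hq | hq
        · exact absurd hq hqu1
        · rw [hq]; exact (hact _ hQT.2 u2 d2 hA2 he2).2 (by omega)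
        · rw [hq]; exact (hact _ hQT.2 u3 d3 hA3 he3).2 (by omega)
        · rw [hq]; exact (hact _ hQT.2 u4 d4 hA4 he4).2 (by omega)
    have hcnt : sqActCount ((ruleS {3})^[d2+1] c) u = 3 := by
      unfold sqActCount
      rw [hfil, Finset.card_erase_of_mem hm1, Stmt9.card_sqNbrs]
    have hTrue : (ruleS {3})^[d2+2] c u = true := by
      have h5 : (ruleS {3})^[d2+1+1] c u = ruleS {3} ((ruleS {3})^[d2+1] c) u := by
        rw [Function.iterate_succ_apply']
      rw [show d2+2 = d2+1+1 from rfl, h5]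
      show ((ruleS {3})^[d2+1] c u ||
        decide (sqActCount ((ruleS {3})^[d2+1] c) u ∈ ({3} : Finset ℕ))) = true
      rw [hQT.1, hcnt]
      simp
    rw [hstab.2 (d2+2)] at hTrue
    exact Bool.false_ne_true hTrue
  · -- d1 = d2 → stable under rule 3
    intro h12eq
    have hQall : ∀ t, ((ruleS {3})^[t] c u = false ∧
        ∀ w, (sqG0 c).Reachable u w → w ≠ u →
          (((ruleS {3})^[t] c w = true) ↔ e w + 1 ≤ t)) := by
      intro t
      induction t with
      | zero => exact hQ0
      | succ t ih =>
        refine hstep t ih ?_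
        intro hcnt
        by_cases hA : d1 + 1 ≤ t
        · have hfil : (sqNbrs u).filter (fun q => (ruleS {3})^[t] c q = true)
              = sqNbrs u := by
            apply Finset.filter_true_of_mem
            intro q hqn
            have hq4 : q = u1 ∨ q = u2 ∨ q = u3 ∨ q = u4 := by
              rw [hnbrs] at hqn
              simpa using hqn
            rcases hq4 with hq | hq | hq | hq
            · rw [hq]; exact (hact t ih.2 _ d1 hA1 he1).2 (by omega)
            · rw [hq]; exact (hact t ih.2 _ d2 hA2 he2).2 (by omega)
            · rw [hq]; exact (hact t ih.2 _ d3 hA3 he3).2 (by omega)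
            · rw [hq]; exact (hact t ih.2 _ d4 hA4 he4).2 (by omega)
          have h4 : sqActCount ((ruleS {3})^[t] c) u = 4 := by
            unfold sqActCount
            rw [hfil, Stmt9.card_sqNbrs]
          omega
        · have hX1 : (ruleS {3})^[t] c u1 = false :=
            hfalse _ _ (hact t ih.2 u1 d1 hA1 he1) (by omega)
          have hX2 : (ruleS {3})^[t] c u2 = false :=
            hfalse _ _ (hact t ih.2 u2 d2 hA2 he2) (by omega)
          have := hcard2 _ hX1 hX2
          omega
    exact ⟨hu, fun t => (hQall t).1⟩
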